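/- Let Z be a standard normal random variable. For any s > 0, any h, t ∈ ℝ, and any δ > 0, we have inf over |b| ≤ t + δs of P(|b + sZ| ≤ h) ≥ (inf over |b| ≤ t of P(|b + sZ| ≤ h)) − δ. -/
import Mathlib


open MeasureTheory ProbabilityTheory Real

lemma gaussian_set_le (A : Set ℝ) (hA : MeasurableSet A) :
    gaussianReal 0 1 A ≤ ENNReal.ofReal ((Real.sqrt (2 * Real.pi))⁻¹) * volume A := by
  rw [gaussianReal_apply 0 one_ne_zero A]
  calc ∫⁻ x in A, gaussianPDF 0 1 x
      ≤ ∫⁻ _ in A, ENNReal.ofReal ((Real.sqrt (2 * Real.pi))⁻¹) := by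
        refine setLIntegral_mono' hA (fun x _ => ?_)
        unfold gaussianPDF gaussianPDFReal
        apply ENNReal.ofReal_le_ofReal
        simp only [NNReal.coe_one, mul_one]
        exact mul_le_of_le_one_right (by positivity)
          (by rw [Real.exp_le_one_iff]; nlinarith [sq_nonneg (x - 0)])
    _ = ENNReal.ofReal ((Real.sqrt (2 * Real.pi))⁻¹) * volume A := setLIntegral_const _ _

lemma gaussian_shift_bound (s h δ b b' : ℝ) (hs : 0 < s) (hδ : 0 < δ)
    (hbb : |b' - b| ≤ δ * s) :
    ((gaussianReal 0 1) {z : ℝ | |b' + s * z| ≤ h}).toReal ≤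
      ((gaussianReal 0 1) {z : ℝ | |b + s * z| ≤ h}).toReal + δ := by
  set D : Set ℝ := Set.Ico ((-h - b') / s) ((-h - b) / s) ∪ Set.Ioc ((h - b) / s) ((h - b') / s)
    with hD
  have hsub : {z : ℝ | |b' + s * z| ≤ h} ⊆ {z : ℝ | |b + s * z| ≤ h} ∪ D := by
    intro z hz
    simp only [Set.mem_setOf_eq, abs_le] at hz
    by_cases hmem : |b + s * z| ≤ h
    · exact Or.inl hmem
    · right
      rw [abs_le, not_and_or, not_le, not_le] at hmem
      rcases hmem with hlt | hgt
      · left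
        constructor
        · rw [div_le_iff₀ hs]; nlinarith [hz.1]
        · rw [lt_div_iff₀ hs]; nlinarith
      · right
        constructor
        · rw [div_lt_iff₀ hs]; nlinarith
        · rw [le_div_iff₀ hs]; nlinarith [hz.2]
  have habs := abs_le.mp hbb
  have hvol : volume D ≤ ENNReal.ofReal δ + ENNReal.ofReal δ := by
    rw [hD]
    refine le_trans (measure_union_le _ _) ?_
    rw [Real.volume_Ico, Real.volume_Ioc]
    gcongr
    · rw [div_sub_div_same, div_le_iff₀ hs]; nlinarith [habs.1]
    · rw [div_sub_div_same, div_le_iff₀ hs]; nlinarith [habs.2]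
  have hC : ENNReal.ofReal ((Real.sqrt (2 * Real.pi))⁻¹) * (ENNReal.ofReal δ + ENNReal.ofReal δ)
      ≤ ENNReal.ofReal δ := by
    rw [← ENNReal.ofReal_add hδ.le hδ.le, ← ENNReal.ofReal_mul (by positivity)]
    apply ENNReal.ofReal_le_ofReal
    have h2 : (2 : ℝ) ≤ Real.sqrt (2 * Real.pi) := by
      nlinarith [Real.sq_sqrt (show (0:ℝ) ≤ 2 * Real.pi by positivity),
        Real.sqrt_nonneg (2 * Real.pi), Real.pi_gt_three]
    rw [inv_mul_le_iff₀ (by positivity)]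
    nlinarith
  have hDmeas : MeasurableSet D := (measurableSet_Ico.union measurableSet_Ioc)
  have hDm : gaussianReal 0 1 D ≤ ENNReal.ofReal δ :=
    le_trans (le_trans (gaussian_set_le D hDmeas) (mul_le_mul_right hvol _)) hC
  have hmeas : gaussianReal 0 1 {z : ℝ | |b' + s * z| ≤ h} ≤
      gaussianReal 0 1 {z : ℝ | |b + s * z| ≤ h} + ENNReal.ofReal δ :=
    le_trans (measure_mono hsub) (le_trans (measure_union_le _ _) (by gcongr))
  have hfin : gaussianReal 0 1 {z : ℝ | |b + s * z| ≤ h} + ENNReal.ofReal δ ≠ ⊤ :=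
    ENNReal.add_ne_top.mpr ⟨measure_ne_top _ _, ENNReal.ofReal_ne_top⟩
  have := ENNReal.toReal_mono hfin hmeas
  rwa [ENNReal.toReal_add (measure_ne_top _ _) ENNReal.ofReal_ne_top,
    ENNReal.toReal_ofReal hδ.le] at this

/-- Gaussian CDF stability: for `Z ~ N(0,1)`, `s > 0`, `δ > 0`,
`inf_{|b| ≤ t + δs} P(|b + sZ| ≤ h) ≥ inf_{|b| ≤ t} P(|b + sZ| ≤ h) − δ`. -/
theorem gaussian_inf_stability (s h t δ : ℝ) (hs : 0 < s) (hδ : 0 < δ) :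
    sInf {p : ℝ | ∃ b : ℝ, |b| ≤ t + δ * s ∧
        p = ((gaussianReal 0 1) {z : ℝ | |b + s * z| ≤ h}).toReal} ≥
      sInf {p : ℝ | ∃ b : ℝ, |b| ≤ t ∧
        p = ((gaussianReal 0 1) {z : ℝ | |b + s * z| ≤ h}).toReal} - δ := by
  set S : Set ℝ := {p : ℝ | ∃ b : ℝ, |b| ≤ t ∧
      p = ((gaussianReal 0 1) {z : ℝ | |b + s * z| ≤ h}).toReal} with hS
  set S' : Set ℝ := {p : ℝ | ∃ b : ℝ, |b| ≤ t + δ * s ∧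
      p = ((gaussianReal 0 1) {z : ℝ | |b + s * z| ≤ h}).toReal} with hS'
  have hSbd : BddBelow S := ⟨0, fun p ⟨b, _, hp⟩ => hp ▸ ENNReal.toReal_nonneg⟩
  by_cases hts : t + δ * s < 0
  · have hSe : S = ∅ := by
      ext p; simp only [hS, Set.mem_setOf_eq, Set.mem_empty_iff_false, iff_false]
      rintro ⟨b, hb, _⟩; nlinarith [abs_nonneg b]
    have hS'e : S' = ∅ := by
      ext p; simp only [hS', Set.mem_setOf_eq, Set.mem_empty_iff_false, iff_false]
      rintro ⟨b, hb, _⟩; nlinarith [abs_nonneg b]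
    rw [hSe, hS'e, Real.sInf_empty]
    linarith
  · push_neg at hts
    have hS'ne : S'.Nonempty := ⟨_, 0, by simpa using hts, rfl⟩
    refine le_csInf hS'ne ?_
    rintro p ⟨b, hb, hp⟩
    by_cases ht : t < 0
    · have hSe : S = ∅ := by
        ext q; simp only [hS, Set.mem_setOf_eq, Set.mem_empty_iff_false, iff_false]
        rintro ⟨c, hc, _⟩; nlinarith [abs_nonneg c]
      rw [hSe, Real.sInf_empty]
      rw [hp]; linarith [ENNReal.toReal_nonneg (a := gaussianReal 0 1 {z : ℝ | |b + s * z| ≤ h})]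
    · push_neg at ht
      set b' : ℝ := max (-t) (min b t) with hb'
      have hb't : |b'| ≤ t := by
        rw [abs_le]
        constructor
        · exact le_max_left _ _
        · exact max_le (by linarith) (min_le_right _ _)
      have hdiff : |b - b'| ≤ δ * s := by
        rw [abs_le] at hb ⊢
        rcases le_total b (-t) with h1 | h1
        · have : b' = -t := by
            rw [hb']; rw [max_eq_left]; exact le_trans (min_le_left _ _) h1
          rw [this]; constructor <;> nlinarith [hb.1]
        · rcases le_total b t with h2 | h2
          · have : b' = b := by rw [hb', min_eq_left h2, max_eq_right h1]
            rw [this]; constructor <;> nlinarith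
          · have : b' = t := by rw [hb', min_eq_right h2, max_eq_right (by linarith)]
            rw [this]; constructor <;> nlinarith [hb.2]
      have hmem : ((gaussianReal 0 1) {z : ℝ | |b' + s * z| ≤ h}).toReal ∈ S :=
        ⟨b', hb't, rfl⟩
      have hinf : sInf S ≤ ((gaussianReal 0 1) {z : ℝ | |b' + s * z| ≤ h}).toReal :=
        csInf_le hSbd hmem
      have hkey := gaussian_shift_bound s h δ b b' hs hδ (by rw [abs_sub_comm]; exact hdiff)
      rw [hp]
      linarith
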